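/- Let E be a finite-dimensional real vector space and let ‖·‖_L and ‖·‖_U be two norms on E. Then there exist a positive integer c and points x₁, …, x_c ∈ E such that for every function ρ : E → ℝ which is a norm (i.e. ρ(v) ≥ 0 with ρ(v) = 0 iff v = 0, ρ(t·v) = |t|·ρ(v) for all t ∈ ℝ, and ρ(u + v) ≤ ρ(u) + ρ(v)) and which satisfies ‖v‖_L ≤ ρ(v) ≤ ‖v‖_U for all v ∈ E, the unit sphere {v : ρ(v) = 1} is contained in the union over i = 1,…,c of the open ρ-balls {v : ρ(v − xᵢ) < 1/4}. -/

import Mathlib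

/-- `N` is a norm on the real vector space `E`. -/
def IsNorm {E : Type*} [AddCommGroup E] [Module ℝ E] (N : E → ℝ) : Prop :=
  (∀ v : E, 0 ≤ N v) ∧ (∀ v : E, N v = 0 ↔ v = 0) ∧
  (∀ (t : ℝ) (v : E), N (t • v) = |t| * N v) ∧
  (∀ u v : E, N (u + v) ≤ N u + N v)

/-- For a family of norms sandwiched between two fixed norms on a finite-dimensional
real vector space, a single family of `c` centres suffices to cover each unit sphere
by `c` open balls of radius `1/4` (in the corresponding norm). -/
theorem uniform_quarter_ball_covering_of_bounded_norm_family
    {E : Type*} [AddCommGroup E] [Module ℝ E] [FiniteDimensional ℝ E]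
    (NL NU : E → ℝ) (hNL : IsNorm NL) (hNU : IsNorm NU) :
    ∃ (c : ℕ) (x : Fin c → E), 0 < c ∧
      ∀ ρ : E → ℝ, IsNorm ρ → (∀ v : E, NL v ≤ ρ v ∧ ρ v ≤ NU v) →
        ∀ v : E, ρ v = 1 → ∃ i, ρ (v - x i) < 1/4 := by
  classical
  -- Endow `E` with the norm `NL`.
  letI : NormedAddCommGroup E := AddGroupNorm.toNormedAddCommGroup
    { toFun := NL
      map_zero' := (hNL.2.1 0).mpr rfl
      add_le' := hNL.2.2.2
      neg' := fun v => by
        have := hNL.2.2.1 (-1) v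
        simpa using this
      eq_zero_of_map_eq_zero' := fun v h => (hNL.2.1 v).mp h }
  letI : NormedSpace ℝ E :=
    ⟨fun t v => le_of_eq (by rw [Real.norm_eq_abs]; exact hNL.2.2.1 t v)⟩
  have hnorm : ∀ v : E, ‖v‖ = NL v := fun _ => rfl
  -- finite subadditivity of `NU`
  have hNU0 : NU 0 = 0 := (hNU.2.1 0).mpr rfl
  have hsum : ∀ (s : Finset (Fin (Module.finrank ℝ E))) (g : Fin (Module.finrank ℝ E) → E),
      NU (∑ i ∈ s, g i) ≤ ∑ i ∈ s, NU (g i) := by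
    intro s g
    induction s using Finset.induction_on with
    | empty => simp [hNU0]
    | insert a s hx ih =>
      rw [Finset.sum_insert hx, Finset.sum_insert hx]
      exact (hNU.2.2.2 _ _).trans (by linarith)
  -- `NU` bounded by a multiple of `NL`
  obtain ⟨C, hC0, hC⟩ : ∃ C : ℝ, 0 < C ∧ ∀ v : E, NU v ≤ C * NL v := by
    let b := Module.finBasis ℝ E
    let f : Fin (Module.finrank ℝ E) → (E →L[ℝ] ℝ) :=
      fun i => LinearMap.toContinuousLinearMap (b.coord i)
    have hS0 : 0 ≤ ∑ i, ‖f i‖ * NU (b i) :=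
      Finset.sum_nonneg fun i _ => mul_nonneg (norm_nonneg _) (hNU.1 _)
    refine ⟨(∑ i, ‖f i‖ * NU (b i)) + 1, by linarith, fun v => ?_⟩
    have hrepr : (∑ i, b.repr v i • b i) = v := b.sum_repr v
    have h1 : NU v ≤ ∑ i, NU (b.repr v i • b i) := by
      calc NU v = NU (∑ i, b.repr v i • b i) := by rw [hrepr]
      _ ≤ ∑ i, NU (b.repr v i • b i) := hsum _ _
    have h2 : ∀ i, NU (b.repr v i • b i) ≤ (‖f i‖ * NU (b i)) * NL v := by
      intro i
      rw [hNU.2.2.1]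
      have hco : |b.repr v i| ≤ ‖f i‖ * ‖v‖ := by
        have := (f i).le_opNorm v
        simpa [f, Real.norm_eq_abs, Module.Basis.coord_apply] using this
      calc |b.repr v i| * NU (b i) ≤ (‖f i‖ * ‖v‖) * NU (b i) :=
            mul_le_mul_of_nonneg_right hco (hNU.1 _)
      _ = (‖f i‖ * NU (b i)) * NL v := by rw [hnorm]; ring
    have h3 : NU v ≤ (∑ i, ‖f i‖ * NU (b i)) * NL v := by
      calc NU v ≤ ∑ i, NU (b.repr v i • b i) := h1
      _ ≤ ∑ i, (‖f i‖ * NU (b i)) * NL v :=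
            Finset.sum_le_sum fun i _ => h2 i
      _ = (∑ i, ‖f i‖ * NU (b i)) * NL v := by rw [Finset.sum_mul]
    have hNLv : 0 ≤ NL v := hNL.1 v
    nlinarith
  -- Cover the compact `NL`-ball of radius 1 by finitely many small balls.
  set ε : ℝ := 1 / (4 * C) with hε
  have hεpos : 0 < ε := by positivity
  have hK : IsCompact (Metric.closedBall (0 : E) 1) := isCompact_closedBall 0 1
  obtain ⟨t, ht⟩ := hK.elim_finite_subcover (fun y : E => Metric.ball y ε)
    (fun _ => Metric.isOpen_ball)
    (fun v _ => Set.mem_iUnion.mpr ⟨v, Metric.mem_ball_self hεpos⟩)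
  refine ⟨t.toList.length + 1,
    fun i => if h : (i : ℕ) < t.toList.length then t.toList.get ⟨i, h⟩ else 0,
    Nat.succ_pos _, ?_⟩
  intro ρ hρ hρs v hv1
  have hvK : v ∈ Metric.closedBall (0 : E) 1 := by
    rw [Metric.mem_closedBall, dist_zero_right, hnorm]
    exact le_trans (hρs v).1 hv1.le
  obtain ⟨y, hyt, hyb⟩ := Set.mem_iUnion₂.mp (ht hvK)
  obtain ⟨n, hn⟩ := List.mem_iff_get.mp (Finset.mem_toList.mpr hyt)
  have hd : NL (v - y) < ε := by
    have := hyb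
    rw [Metric.mem_ball, dist_eq_norm, hnorm] at this
    exact this
  have : ρ (v - y) ≤ NU (v - y) := (hρs _).2
  have h4 : NU (v - y) ≤ C * NL (v - y) := hC _
  have : ρ (v - y) < C * ε := by
    have h5 : C * NL (v - y) < C * ε := by
      exact (mul_lt_mul_iff_right₀ hC0).mpr hd
    linarith
  have hCε : C * ε = 1 / 4 := by
    field_simp [hε]
    rw [hε]; field_simp [hC0.ne']
  have hρvy : ρ (v - y) < 1 / 4 := by linarith
  refine ⟨⟨(n : ℕ), Nat.lt_succ_of_lt n.isLt⟩, ?_⟩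
  show ρ (v - (if h : (n : ℕ) < t.toList.length then t.toList.get ⟨(n : ℕ), h⟩ else 0)) < 1/4
  rw [dif_pos n.isLt]
  exact hn ▸ hρvy
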